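/- Let (M^n, g, ∇, φ, η, ξ) be a quadratic metric φ-hypersurface of a locally metallic Riemannian manifold, with shape operator A satisfying A ξ = 0 and ∇_X ξ = pAX − φAX. Then the characteristic vector field ξ is Killing if and only if φA + Aφ = 2pA. -/
import Mathlib


/-- Let `(M^n, g, ∇, φ, η, ξ)` be a quadratic metric φ-hypersurface of a
locally metallic Riemannian manifold, with (symmetric) shape operator `A` satisfying
`Aξ = 0` and `∇_X ξ = pAX − φAX`. Then the characteristic vector field `ξ` is a Killing
vector field (`g(∇_Y ξ, Z) + g(∇_Z ξ, Y) = 0` for all `Y,Z`) if and only if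
`φA + Aφ = 2pA`. -/
theorem xi_Killing_iff
    {A V : Type*} [CommRing A] [AddCommGroup V] [Module A V]
    (g : V →ₗ[A] V →ₗ[A] A)
    (hgsym : ∀ X Y, g X Y = g Y X)
    (hgnondeg : ∀ X : V, (∀ Y, g X Y = 0) → X = 0)
    (nabla : V → V → V)
    (φ : V →ₗ[A] V) (ξ : V) (η : V → A) (p q : ℕ) (hp : 0 < p) (hq : 0 < q)
    (hη : ∀ X, η X = g X ξ)
    (hφξ : φ ξ = 0) (hηξ : η ξ = 1)
    (hφ2 : ∀ X, φ (φ X) = (p : A) • φ X + (q : A) • (X - η X • ξ))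
    (hφsym : ∀ X Y, g (φ X) Y = g X (φ Y))
    (S : V →ₗ[A] V)
    (hSsym : ∀ X Y, g (S X) Y = g X (S Y))
    (hSξ : S ξ = 0)
    (hnablaXi : ∀ X, nabla X ξ = (p : A) • S X - φ (S X)) :
    (∀ Y Z, g (nabla Y ξ) Z + g (nabla Z ξ) Y = 0) ↔
    (∀ X, φ (S X) + S (φ X) = (2 * (p : A)) • S X) := by
  have key : ∀ Y Z, g (nabla Y ξ) Z + g (nabla Z ξ) Y
      = g ((2 * (p : A)) • S Y - (φ (S Y) + S (φ Y))) Z := by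
    intro Y Z
    rw [hnablaXi, hnablaXi]
    have e1 : g (S Z) Y = g (S Y) Z := by rw [hSsym, hgsym]
    have e2 : g (φ (S Z)) Y = g (S (φ Y)) Z := by
      rw [hφsym, hgsym, hSsym]
    simp only [map_sub, map_add, map_smul, LinearMap.sub_apply, LinearMap.add_apply,
      LinearMap.smul_apply, smul_eq_mul]
    rw [e1, e2]
    ring
  constructor
  · intro hK X
    have h0 : (2 * (p : A)) • S X - (φ (S X) + S (φ X)) = 0 := by
      apply hgnondeg
      intro Z
      rw [← key X Z, hK X Z]
    rw [sub_eq_zero] at h0; exact h0.symm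
  · intro h Y Z
    rw [key, h Y]
    simp
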